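/- For a sequence (g₀,g₁,g₂,...) ∈ {0,1}^∞ and n ≥ 0, the linear game ∅^{g₀g₁...gₙ} (a chain of singletons with activeness gᵢ at depth n−i) is canonical if and only if n ≤ 1, or n ≥ 2 and g₀g₁g₂ ∈ {001, 011, 100, 101, 110}. -/

import Mathlib

inductive AGame : Type where
  | mk : List AGame → Bool → AGame

namespace AGame

noncomputable instance : DecidableEq AGame := Classical.decEq _

def opts : AGame → List AGame | mk gs _ => gs
def act : AGame → Bool | mk _ g => g

theorem sizeOf_lt_of_mem {G G' : AGame} (h : G' ∈ G.opts) : sizeOf G' < sizeOf G := by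
  cases G with
  | mk gs g =>
    simp only [opts] at h
    have := List.sizeOf_lt_of_mem h
    simp [AGame.mk.sizeOf_spec]
    omega

/-- Disjunctive sum of games with activeness. -/
def add (G H : AGame) : AGame :=
  mk (G.opts.attach.map (fun x => add x.1 H) ++
      H.opts.attach.map (fun y => add G y.1)) (G.act || H.act)
termination_by sizeOf G + sizeOf H
decreasing_by
  · have := sizeOf_lt_of_mem x.2; omega
  · have := sizeOf_lt_of_mem y.2; omega

/-- `PPos G` means the outcome of `G` is 𝒫 (second player wins). -/
def PPos (G : AGame) : Prop :=
  G.act = false ∨ ∀ G' ∈ G.opts.attach, ¬ PPos G'.1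
termination_by sizeOf G
decreasing_by
  have := sizeOf_lt_of_mem G'.2; omega

/-- Hereditary set-equality (the paper's ≅). -/
def Identical (G H : AGame) : Prop :=
  G.act = H.act ∧ (∀ G' ∈ G.opts.attach, ∃ H' ∈ H.opts.attach, Identical G'.1 H'.1)
              ∧ (∀ H' ∈ H.opts.attach, ∃ G' ∈ G.opts.attach, Identical G'.1 H'.1)
termination_by sizeOf G + sizeOf H
decreasing_by
  · have := sizeOf_lt_of_mem G'.2; have := sizeOf_lt_of_mem H'.2; omega
  · have := sizeOf_lt_of_mem G'.2; have := sizeOf_lt_of_mem H'.2; omega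

/-- Equivalence of games with activeness: same outcome in every sum. -/
def Equiv (G H : AGame) : Prop := ∀ X : AGame, (PPos (add G X) ↔ PPos (add H X))

end AGame

namespace AGame

/-- Nimbers with activeness: `star γ n ≅ {star γ j : j < n}^{γ n}`. -/
def star (γ : ℕ → Bool) : ℕ → AGame
  | n => mk ((List.range n).attach.map (fun j => star γ j.1)) (γ n)
termination_by n => n
decreasing_by
  have := j.2; simp [List.mem_range] at this; omega

/-- The generalized Grundy set `𝒢^γ(G)`. -/
def GSet (γ : ℕ → Bool) (G : AGame) : Set ℕ := {n | PPos (add G (star γ n))}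

/-- Minimum excludant of a set of naturals. -/
noncomputable def mex (S : Set ℕ) : ℕ := sInf {n | n ∉ S}

/-- Ordinary Grundy value, computed ignoring activeness. -/
noncomputable def grundy (G : AGame) : ℕ :=
  mex {m | ∃ G' ∈ G.opts.attach, grundy G'.1 = m}
termination_by sizeOf G
decreasing_by
  have := sizeOf_lt_of_mem G'.2; omega

/-- The three types of games with activeness. -/
inductive AType : Type where
  | inactive : AType            -- type 0
  | activeSomeInactive : AType  -- type 1_{∃0}
  | activeAllActive : AType     -- type 1_{∀1}

open Classical in
/-- `type(G^g)`. -/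
noncomputable def typ (G : AGame) : AType :=
  if G.act = false then .inactive
  else if ∃ G' ∈ G.opts, G'.act = false then .activeSomeInactive
  else .activeAllActive

/-- Formal birthday `b(G)`. -/
def bday (G : AGame) : ℕ :=
  (G.opts.attach.map (fun G' => bday G'.1 + 1)).foldr max 0
termination_by sizeOf G
decreasing_by
  have := sizeOf_lt_of_mem G'.2; omega

/-- An option `G'` of `G` is reversible if it has an option equivalent to `G`. -/
def Reversible (G G' : AGame) : Prop := ∃ G'' ∈ G'.opts, Equiv G'' G

/-- A canonical game: all options canonical and no option reversible. -/
def Canonical (G : AGame) : Prop :=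
  (∀ G' ∈ G.opts.attach, Canonical G'.1) ∧ (∀ G' ∈ G.opts, ¬ Reversible G G')
termination_by sizeOf G
decreasing_by
  have := sizeOf_lt_of_mem G'.2; omega

/-- A transitive game: all options transitive and options of options are options. -/
def TransGame (G : AGame) : Prop :=
  (∀ G' ∈ G.opts.attach, TransGame G'.1) ∧ (∀ G' ∈ G.opts, ∀ G'' ∈ G'.opts, G'' ∈ G.opts)
termination_by sizeOf G
decreasing_by
  have := sizeOf_lt_of_mem G'.2; omega

/-- `G` is covered by `H` if every option of `G` is equivalent to some option of `H`. -/
def Covered (G H : AGame) : Prop := ∀ G' ∈ G.opts, ∃ H' ∈ H.opts, Equiv G' H'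

/-- The relation `G ⋈ H`. -/
def Bowtie (G H : AGame) : Prop :=
  (∀ G' ∈ G.opts, ¬ Equiv G' H) ∧ (∀ H' ∈ H.opts, ¬ Equiv G H')

/-- The linear chain `∅^{g₀ g₁ … gₙ}`. -/
def chain (g : ℕ → Bool) : ℕ → AGame
  | 0 => mk [] (g 0)
  | n + 1 => mk [chain g n] (g (n + 1))

end AGame

namespace AGame

theorem ppos_def (G : AGame) : PPos G ↔ (G.act = false ∨ ∀ G' ∈ G.opts, ¬ PPos G') := by
  rw [PPos]
  constructor
  · rintro (h | h)
    · exact Or.inl h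
    · exact Or.inr fun G' hG' => h ⟨G', hG'⟩ (List.mem_attach _ _)
  · rintro (h | h)
    · exact Or.inl h
    · exact Or.inr fun G' _ => h G'.1 G'.2

theorem add_def (G H : AGame) :
    add G H = mk (G.opts.map (fun x => add x H) ++ H.opts.map (fun y => add G y)) (G.act || H.act) := by
  rw [add]
  congr 1
  · congr 1 <;> simp [List.attach_map_val]

theorem opts_add (G H : AGame) :
    (add G H).opts = G.opts.map (fun x => add x H) ++ H.opts.map (fun y => add G y) := by
  rw [add_def]; rfl

theorem act_add (G H : AGame) : (add G H).act = (G.act || H.act) := by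
  rw [add_def]; rfl

theorem ppos_add_iff (G H : AGame) :
    PPos (add G H) ↔ ((G.act || H.act) = false ∨
      ((∀ G' ∈ G.opts, ¬ PPos (add G' H)) ∧ (∀ H' ∈ H.opts, ¬ PPos (add G H')))) := by
  rw [ppos_def, opts_add, act_add]
  simp only [List.mem_append, List.mem_map]
  constructor
  · rintro (h | h)
    · exact Or.inl h
    · refine Or.inr ⟨fun G' hG' => h _ (Or.inl ⟨G', hG', rfl⟩), fun H' hH' => h _ (Or.inr ⟨H', hH', rfl⟩)⟩
  · rintro (h | ⟨h1, h2⟩)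
    · exact Or.inl h
    · refine Or.inr fun Z hZ => ?_
      rcases hZ with ⟨G', hG', rfl⟩ | ⟨H', hH', rfl⟩
      · exact h1 G' hG'
      · exact h2 H' hH'

theorem canonical_def (G : AGame) : Canonical G ↔
    ((∀ G' ∈ G.opts, Canonical G') ∧ (∀ G' ∈ G.opts, ¬ Reversible G G')) := by
  rw [Canonical]
  constructor
  · rintro ⟨h1, h2⟩
    exact ⟨fun G' hG' => h1 ⟨G', hG'⟩ (List.mem_attach _ _), h2⟩
  · rintro ⟨h1, h2⟩
    exact ⟨fun G' _ => h1 G'.1 G'.2, h2⟩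

example (g : ℕ → Bool) : chain g 2 = mk [mk [mk [] (g 0)] (g 1)] (g 2) := rfl
example (g : ℕ → Bool) : (chain g 2).opts = [chain g 1] := rfl
example (g : ℕ → Bool) : (chain g 2).act = g 2 := rfl

end AGame

namespace AGame

def tower (Y : AGame) : ℕ → AGame
  | 0 => Y
  | i + 1 => mk [tower Y i] true

def tt (g : ℕ → Bool) (Y : AGame) (k i : ℕ) : Prop := PPos (add (chain g k) (tower Y i))

theorem tt_succ_succ (g : ℕ → Bool) (Y : AGame) (k i : ℕ) :
    tt g Y (k+1) (i+1) ↔ (¬ tt g Y k (i+1) ∧ ¬ tt g Y (k+1) i) := by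
  rw [tt, ppos_add_iff]
  simp [tt, tower, chain, opts, act]

theorem tt_zero_succ (g : ℕ → Bool) (Y : AGame) (i : ℕ) :
    tt g Y 0 (i+1) ↔ ¬ tt g Y 0 i := by
  rw [tt, ppos_add_iff]
  simp [tt, tower, chain, opts, act]

theorem tt_succ_zero (g : ℕ → Bool) (Y : AGame) (hY : Y.act = true) (k : ℕ) :
    tt g Y (k+1) 0 → ¬ tt g Y k 0 := by
  rw [tt, ppos_add_iff]
  rintro (h | ⟨h1, _⟩)
  · rw [show tower Y 0 = Y from rfl, hY] at h
    simp at h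
  · exact h1 (chain g k) (by simp [chain, opts])

theorem good_side (g : ℕ → Bool) (Y : AGame) (hY : Y.act = true)
    (h0 : ¬ PPos (add (chain g 0) Y)) (h2 : PPos (add (chain g 2) Y)) (k : ℕ) :
    ¬ Equiv (chain g k) (chain g (k+2)) := by
  have f00 : ¬ tt g Y 0 0 := h0
  have f20 : tt g Y 2 0 := h2
  have f10 : ¬ tt g Y 1 0 := tt_succ_zero g Y hY 1 f20
  have f30 : ¬ tt g Y 3 0 := fun h => tt_succ_zero g Y hY 2 h f20
  have L0 : ∀ i, (tt g Y 0 i ↔ Odd i) := by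
    intro i; induction i with
    | zero => simp [Nat.odd_iff, f00]
    | succ i ih => rw [tt_zero_succ, ih]; simp [Nat.odd_iff]; omega
  have f01 : tt g Y 0 1 := (L0 1).mpr ⟨0, by ring⟩
  have f11 : ¬ tt g Y 1 1 := by rw [tt_succ_succ]; rintro ⟨a, _⟩; exact a f01
  have f21 : ¬ tt g Y 2 1 := by rw [tt_succ_succ]; rintro ⟨_, b⟩; exact b f20
  have f31 : tt g Y 3 1 := by rw [tt_succ_succ]; exact ⟨f21, f30⟩
  have f02 : ¬ tt g Y 0 2 := by rw [L0]; simp [Nat.odd_iff]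
  have f12 : tt g Y 1 2 := by rw [tt_succ_succ]; exact ⟨f02, f11⟩
  have f22 : ¬ tt g Y 2 2 := by rw [tt_succ_succ]; rintro ⟨a, _⟩; exact a f12
  have f32 : ¬ tt g Y 3 2 := by rw [tt_succ_succ]; rintro ⟨_, b⟩; exact b f31
  have A1 : ∀ i, 2 ≤ i → (tt g Y 1 i ↔ Odd (i+1)) := by
    intro i hi
    induction i, hi using Nat.le_induction with
    | base => simpa [Nat.odd_iff] using f12
    | succ i hi ih => rw [tt_succ_succ, L0, ih]; simp [Nat.odd_iff]; omega
  have A2 : ∀ i, 3 ≤ i → (tt g Y 2 i ↔ Odd (i+2)) := by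
    intro i hi
    induction i, hi using Nat.le_induction with
    | base =>
      rw [tt_succ_succ, A1 3 (by omega)]
      simp only [f22, not_false_eq_true, and_true]
      simp [Nat.odd_iff]
    | succ i hi ih => rw [tt_succ_succ, A1 (i+1) (by omega), ih]; simp [Nat.odd_iff]; omega
  have S : ∀ m, (¬ tt g Y (m+3) (m+2)) ∧ (¬ tt g Y (m+3) (m+3)) ∧ tt g Y (m+3) (m+1) ∧
      (∀ i, m+4 ≤ i → (tt g Y (m+3) i ↔ Odd (i+(m+3)))) := by
    intro m; induction m with
    | zero =>
      have h33 : ¬ tt g Y 3 3 := by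
        rw [tt_succ_succ]; rintro ⟨a, _⟩
        exact a ((A2 3 (by omega)).mpr (by simp [Nat.odd_iff]))
      refine ⟨f32, h33, f31, ?_⟩
      intro i hi
      induction i, hi using Nat.le_induction with
      | base =>
        rw [tt_succ_succ, A2 4 (by omega)]
        simp only [h33, not_false_eq_true, and_true]
        simp [Nat.odd_iff]
      | succ i hi ih => rw [tt_succ_succ, A2 (i+1) (by omega), ih]; simp [Nat.odd_iff]; omega
    | succ m ih =>
      obtain ⟨hC, hB, hD, hA⟩ := ih
      have d3 : ¬ tt g Y (m+4) (m+1) := by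
        have := tt_succ_succ g Y (m+3) m
        rw [show m+4 = m+3+1 from rfl, show m+1 = m+0+1 from rfl, tt_succ_succ]
        rintro ⟨a, _⟩; exact a hD
      have hD' : tt g Y (m+4) (m+2) := by
        rw [show m+4 = m+3+1 from rfl, show m+2 = m+1+1 from rfl, tt_succ_succ]
        exact ⟨hC, d3⟩
      have hC' : ¬ tt g Y (m+4) (m+3) := by
        rw [show m+4 = m+3+1 from rfl, show m+3 = m+2+1 from rfl, tt_succ_succ]
        rintro ⟨_, b⟩; exact b hD'
      have hB' : ¬ tt g Y (m+4) (m+4) := by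
        rw [show m+4 = m+3+1 from rfl, tt_succ_succ]
        rintro ⟨a, _⟩
        exact a ((hA (m+4) (by omega)).mpr (by simp [Nat.odd_iff]; omega))
      have hA' : ∀ i, (m+1)+4 ≤ i → (tt g Y (m+4) i ↔ Odd (i+(m+4))) := by
        intro i hi
        induction i, hi using Nat.le_induction with
        | base =>
          rw [show m+1+4 = m+4+1 from rfl, show (m+4:ℕ) = m+3+1 from rfl, tt_succ_succ,
            hA (m+3+1+1) (by omega)]
          simp only [hB', not_false_eq_true, and_true]
          simp [Nat.odd_iff]; omega
        | succ i hi ih =>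
          rw [show m+4 = m+3+1 from rfl, tt_succ_succ, hA (i+1) (by omega), ih]
          simp [Nat.odd_iff]; omega
      exact ⟨hC', hB', hD', hA'⟩
  intro hEq
  have hhigh : ¬ PPos (add (chain g (k+2)) (tower Y (k+1))) := by
    match k with
    | 0 => exact f21
    | (m+1) => exact (S m).1
  have hlow : PPos (add (chain g k) (tower Y (k+1))) := by
    match k with
    | 0 => exact f01
    | 1 => exact f12
    | 2 => exact (A2 3 (by omega)).mpr (by simp [Nat.odd_iff])
    | (m+3) => exact ((S m).2.2.2 (m+4) (by omega)).mpr (by simp [Nat.odd_iff]; omega)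
  exact hhigh ((hEq (tower Y (k+1))).mp hlow)

end AGame

namespace AGame

theorem opts_chain_zero (g : ℕ → Bool) : (chain g 0).opts = [] := rfl
theorem opts_chain_succ (g : ℕ → Bool) (n : ℕ) : (chain g (n+1)).opts = [chain g n] := rfl
theorem act_chain_zero (g : ℕ → Bool) : (chain g 0).act = g 0 := rfl
theorem act_chain_succ (g : ℕ → Bool) (n : ℕ) : (chain g (n+1)).act = g (n+1) := rfl

theorem equiv_bad (g : ℕ → Bool) (h02 : g 2 = g 0) (hcond : g 0 = false ∨ g 1 = true) :
    Equiv (chain g 0) (chain g 2) := by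
  have main : ∀ N (X : AGame), sizeOf X ≤ N →
      (PPos (add (chain g 0) X) ↔ PPos (add (chain g 2) X)) := by
    intro N
    induction N with
    | zero =>
      intro X hX
      cases X with | mk l b => simp [AGame.mk.sizeOf_spec] at hX; try omega
    | succ N ih =>
      intro X hX
      have IH : ∀ X' ∈ X.opts, (PPos (add (chain g 0) X') ↔ PPos (add (chain g 2) X')) := by
        intro X' hX'
        exact ih X' (by have := sizeOf_lt_of_mem hX'; omega)
      rw [ppos_add_iff, ppos_add_iff, act_chain_zero, show (chain g 2).act = g 2 from rfl]
      by_cases hact : (g 0 || X.act) = false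
      · have hact2 : (g 2 || X.act) = false := by rw [h02]; exact hact
        exact iff_of_true (Or.inl hact) (Or.inl hact2)
      · have hact2 : ¬ ((g 2 || X.act) = false) := by rw [h02]; exact hact
        constructor
        · rintro (h | ⟨-, hall⟩)
          · exact absurd h hact
          refine Or.inr ⟨?_, ?_⟩
          · rw [show (chain g 2).opts = [chain g 1] from rfl]
            intro G' hG'
            simp only [List.mem_singleton] at hG'
            subst hG'
            rw [ppos_add_iff, show (chain g 1).act = g 1 from rfl]
            rintro (h1 | ⟨h1, -⟩)
            · simp only [Bool.or_eq_false_iff] at h1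
              have hg0 : g 0 = false := by
                rcases hcond with h | h
                · exact h
                · rw [h] at h1; exact absurd h1.1 (by simp)
              rw [hg0, h1.2] at hact
              exact hact rfl
            · have := h1 (chain g 0) (by rw [show (chain g 1).opts = [chain g 0] from rfl]; simp)
              apply this
              rw [ppos_add_iff]
              exact Or.inr ⟨by rw [opts_chain_zero]; simp, hall⟩
          · intro X' hX'
            rw [← IH X' hX']
            exact hall X' hX'
        · rintro (h | ⟨-, hall⟩)
          · exact absurd h hact2
          refine Or.inr ⟨by rw [opts_chain_zero]; simp, ?_⟩
          intro X' hX'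
          rw [IH X' hX']
          exact hall X' hX'
  intro X
  exact main (sizeOf X) X le_rfl

theorem canonical_chain_iff (g : ℕ → Bool) (n : ℕ) :
    Canonical (chain g n) ↔ ∀ k, k + 2 ≤ n → ¬ Equiv (chain g k) (chain g (k+2)) := by
  induction n with
  | zero =>
    rw [canonical_def, opts_chain_zero]
    constructor
    · intro _ k hk; omega
    · intro _; exact ⟨by simp, by simp⟩
  | succ n ih =>
    rw [canonical_def, opts_chain_succ]
    simp only [List.mem_singleton, forall_eq]
    constructor
    · rintro ⟨hcan, hrev⟩ k hk
      rcases Nat.lt_or_ge (k+2) (n+1) with h | h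
      · exact (ih.mp hcan) k (by omega)
      · have hkeq : k + 2 = n + 1 := by omega
        have hn : n = k + 1 := by omega
        intro hEq
        apply hrev
        rw [Reversible]
        refine ⟨chain g k, ?_, ?_⟩
        · rw [hn, opts_chain_succ]; simp
        · rw [← hkeq]; exact hEq
    · intro h
      refine ⟨ih.mpr (fun k hk => h k (by omega)), ?_⟩
      rw [Reversible]
      rintro ⟨G'', hG'', hEq⟩
      cases n with
      | zero => rw [opts_chain_zero] at hG''; simp at hG''
      | succ m =>
        rw [opts_chain_succ] at hG''
        simp only [List.mem_singleton] at hG''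
        subst hG''
        exact h m (by omega) hEq

end AGame

namespace AGame

theorem exYlem_001 (g : ℕ → Bool) (hg0 : g 0 = false) (hg1 : g 1 = false) (hg2 : g 2 = true) :
    ∃ Y : AGame, Y.act = true ∧ ¬ PPos (add (chain g 0) Y) ∧ PPos (add (chain g 2) Y) := by
  have h_0_0 : PPos (add (chain g 0) (mk [] false)) := by
    rw [ppos_add_iff]
    exact Or.inl (by rw [show (chain g 0).act = g 0 from rfl, hg0]; rfl)
  have h_0_1 : ¬ PPos (add (chain g 0) (mk [(mk [] false)] true)) := by
    rw [ppos_add_iff]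
    rintro (h | ⟨h1, h2⟩)
    · rw [show (chain g 0).act = g 0 from rfl, hg0] at h; simp [act] at h
    · exact h2 (mk [] false) (by simp [opts]) h_0_0
  have h_1_0 : PPos (add (chain g 1) (mk [] false)) := by
    rw [ppos_add_iff]
    exact Or.inl (by rw [show (chain g 1).act = g 1 from rfl, hg1]; rfl)
  have h_1_1 : ¬ PPos (add (chain g 1) (mk [(mk [] false)] true)) := by
    rw [ppos_add_iff]
    rintro (h | ⟨h1, h2⟩)
    · rw [show (chain g 1).act = g 1 from rfl, hg1] at h; simp [act] at h
    · exact h2 (mk [] false) (by simp [opts]) h_1_0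
  have h_2_0 : ¬ PPos (add (chain g 2) (mk [] false)) := by
    rw [ppos_add_iff]
    rintro (h | ⟨h1, h2⟩)
    · rw [show (chain g 2).act = g 2 from rfl, hg2] at h; simp [act] at h
    · exact h1 (chain g 1) (by rw [show (chain g 2).opts = [chain g 1] from rfl]; simp) h_1_0
  have h_2_1 : PPos (add (chain g 2) (mk [(mk [] false)] true)) := by
    rw [ppos_add_iff]
    refine Or.inr ⟨?_, ?_⟩
    · rw [show (chain g 2).opts = [chain g 1] from rfl]
      simp only [List.mem_singleton]
      rintro _ rfl
      exact h_1_1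
    · intro Z' hZ'
      simp only [opts, List.mem_cons, List.not_mem_nil, or_false] at hZ'
      subst hZ'
      exact h_2_0
  exact ⟨(mk [(mk [] false)] true), rfl, h_0_1, h_2_1⟩

theorem exYlem_101 (g : ℕ → Bool) (hg0 : g 0 = true) (hg1 : g 1 = false) (hg2 : g 2 = true) :
    ∃ Y : AGame, Y.act = true ∧ ¬ PPos (add (chain g 0) Y) ∧ PPos (add (chain g 2) Y) := by
  have h_0_0 : PPos (add (chain g 0) (mk [] false)) := by
    rw [ppos_add_iff]
    refine Or.inr ⟨?_, ?_⟩
    · rw [opts_chain_zero]; simp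
    · intro Z' hZ'; simp [opts] at hZ'
  have h_0_1 : ¬ PPos (add (chain g 0) (mk [(mk [] false)] true)) := by
    rw [ppos_add_iff]
    rintro (h | ⟨h1, h2⟩)
    · rw [show (chain g 0).act = g 0 from rfl, hg0] at h; simp [act] at h
    · exact h2 (mk [] false) (by simp [opts]) h_0_0
  have h_1_0 : PPos (add (chain g 1) (mk [] false)) := by
    rw [ppos_add_iff]
    exact Or.inl (by rw [show (chain g 1).act = g 1 from rfl, hg1]; rfl)
  have h_1_1 : ¬ PPos (add (chain g 1) (mk [(mk [] false)] true)) := by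
    rw [ppos_add_iff]
    rintro (h | ⟨h1, h2⟩)
    · rw [show (chain g 1).act = g 1 from rfl, hg1] at h; simp [act] at h
    · exact h2 (mk [] false) (by simp [opts]) h_1_0
  have h_2_0 : ¬ PPos (add (chain g 2) (mk [] false)) := by
    rw [ppos_add_iff]
    rintro (h | ⟨h1, h2⟩)
    · rw [show (chain g 2).act = g 2 from rfl, hg2] at h; simp [act] at h
    · exact h1 (chain g 1) (by rw [show (chain g 2).opts = [chain g 1] from rfl]; simp) h_1_0
  have h_2_1 : PPos (add (chain g 2) (mk [(mk [] false)] true)) := by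
    rw [ppos_add_iff]
    refine Or.inr ⟨?_, ?_⟩
    · rw [show (chain g 2).opts = [chain g 1] from rfl]
      simp only [List.mem_singleton]
      rintro _ rfl
      exact h_1_1
    · intro Z' hZ'
      simp only [opts, List.mem_cons, List.not_mem_nil, or_false] at hZ'
      subst hZ'
      exact h_2_0
  exact ⟨(mk [(mk [] false)] true), rfl, h_0_1, h_2_1⟩

theorem exYlem_011 (g : ℕ → Bool) (hg0 : g 0 = false) (hg1 : g 1 = true) (hg2 : g 2 = true) :
    ∃ Y : AGame, Y.act = true ∧ ¬ PPos (add (chain g 0) Y) ∧ PPos (add (chain g 2) Y) := by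
  have h_0_0 : PPos (add (chain g 0) (mk [] false)) := by
    rw [ppos_add_iff]
    exact Or.inl (by rw [show (chain g 0).act = g 0 from rfl, hg0]; rfl)
  have h_0_2 : PPos (add (chain g 0) (mk [] true)) := by
    rw [ppos_add_iff]
    refine Or.inr ⟨?_, ?_⟩
    · rw [opts_chain_zero]; simp
    · intro Z' hZ'; simp [opts] at hZ'
  have h_0_1 : PPos (add (chain g 0) (mk [(mk [] false)] false)) := by
    rw [ppos_add_iff]
    exact Or.inl (by rw [show (chain g 0).act = g 0 from rfl, hg0]; rfl)
  have h_1_2 : ¬ PPos (add (chain g 1) (mk [] true)) := by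
    rw [ppos_add_iff]
    rintro (h | ⟨h1, h2⟩)
    · rw [show (chain g 1).act = g 1 from rfl, hg1] at h; simp [act] at h
    · exact h1 (chain g 0) (by rw [show (chain g 1).opts = [chain g 0] from rfl]; simp) h_0_2
  have h_0_3 : ¬ PPos (add (chain g 0) (mk [(mk [] true)] true)) := by
    rw [ppos_add_iff]
    rintro (h | ⟨h1, h2⟩)
    · rw [show (chain g 0).act = g 0 from rfl, hg0] at h; simp [act] at h
    · exact h2 (mk [] true) (by simp [opts]) h_0_2
  have h_1_0 : ¬ PPos (add (chain g 1) (mk [] false)) := by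
    rw [ppos_add_iff]
    rintro (h | ⟨h1, h2⟩)
    · rw [show (chain g 1).act = g 1 from rfl, hg1] at h; simp [act] at h
    · exact h1 (chain g 0) (by rw [show (chain g 1).opts = [chain g 0] from rfl]; simp) h_0_0
  have h_2_0 : PPos (add (chain g 2) (mk [] false)) := by
    rw [ppos_add_iff]
    refine Or.inr ⟨?_, ?_⟩
    · rw [show (chain g 2).opts = [chain g 1] from rfl]
      simp only [List.mem_singleton]
      rintro _ rfl
      exact h_1_0
    · intro Z' hZ'; simp [opts] at hZ'
  have h_1_3 : PPos (add (chain g 1) (mk [(mk [] true)] true)) := by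
    rw [ppos_add_iff]
    refine Or.inr ⟨?_, ?_⟩
    · rw [show (chain g 1).opts = [chain g 0] from rfl]
      simp only [List.mem_singleton]
      rintro _ rfl
      exact h_0_3
    · intro Z' hZ'
      simp only [opts, List.mem_cons, List.not_mem_nil, or_false] at hZ'
      subst hZ'
      exact h_1_2
  have h_2_1 : ¬ PPos (add (chain g 2) (mk [(mk [] false)] false)) := by
    rw [ppos_add_iff]
    rintro (h | ⟨h1, h2⟩)
    · rw [show (chain g 2).act = g 2 from rfl, hg2] at h; simp [act] at h
    · exact h2 (mk [] false) (by simp [opts]) h_2_0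
  have h_2_3 : ¬ PPos (add (chain g 2) (mk [(mk [] true)] true)) := by
    rw [ppos_add_iff]
    rintro (h | ⟨h1, h2⟩)
    · rw [show (chain g 2).act = g 2 from rfl, hg2] at h; simp [act] at h
    · exact h1 (chain g 1) (by rw [show (chain g 2).opts = [chain g 1] from rfl]; simp) h_1_3
  have h_0_4 : ¬ PPos (add (chain g 0) (mk [(mk [(mk [] false)] false), (mk [(mk [] true)] true)] true)) := by
    rw [ppos_add_iff]
    rintro (h | ⟨h1, h2⟩)
    · rw [show (chain g 0).act = g 0 from rfl, hg0] at h; simp [act] at h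
    · exact h2 (mk [(mk [] false)] false) (by simp [opts]) h_0_1
  have h_1_4 : ¬ PPos (add (chain g 1) (mk [(mk [(mk [] false)] false), (mk [(mk [] true)] true)] true)) := by
    rw [ppos_add_iff]
    rintro (h | ⟨h1, h2⟩)
    · rw [show (chain g 1).act = g 1 from rfl, hg1] at h; simp [act] at h
    · exact h2 (mk [(mk [] true)] true) (by simp [opts]) h_1_3
  have h_2_4 : PPos (add (chain g 2) (mk [(mk [(mk [] false)] false), (mk [(mk [] true)] true)] true)) := by
    rw [ppos_add_iff]
    refine Or.inr ⟨?_, ?_⟩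
    · rw [show (chain g 2).opts = [chain g 1] from rfl]
      simp only [List.mem_singleton]
      rintro _ rfl
      exact h_1_4
    · intro Z' hZ'
      simp only [opts, List.mem_cons, List.not_mem_nil, or_false] at hZ'
      rcases hZ' with rfl | rfl
      · exact h_2_1
      · exact h_2_3
  exact ⟨(mk [(mk [(mk [] false)] false), (mk [(mk [] true)] true)] true), rfl, h_0_4, h_2_4⟩

theorem exYlem_100 (g : ℕ → Bool) (hg0 : g 0 = true) (hg1 : g 1 = false) (hg2 : g 2 = false) :
    ∃ Y : AGame, Y.act = true ∧ ¬ PPos (add (chain g 0) Y) ∧ PPos (add (chain g 2) Y) := by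
  have h_0_0 : PPos (add (chain g 0) (mk [] true)) := by
    rw [ppos_add_iff]
    refine Or.inr ⟨?_, ?_⟩
    · rw [opts_chain_zero]; simp
    · intro Z' hZ'; simp [opts] at hZ'
  have h_0_2 : PPos (add (chain g 0) (mk [] false)) := by
    rw [ppos_add_iff]
    refine Or.inr ⟨?_, ?_⟩
    · rw [opts_chain_zero]; simp
    · intro Z' hZ'; simp [opts] at hZ'
  have h_0_1 : ¬ PPos (add (chain g 0) (mk [(mk [] true)] true)) := by
    rw [ppos_add_iff]
    rintro (h | ⟨h1, h2⟩)
    · rw [show (chain g 0).act = g 0 from rfl, hg0] at h; simp [act] at h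
    · exact h2 (mk [] true) (by simp [opts]) h_0_0
  have h_0_3 : ¬ PPos (add (chain g 0) (mk [(mk [] false)] false)) := by
    rw [ppos_add_iff]
    rintro (h | ⟨h1, h2⟩)
    · rw [show (chain g 0).act = g 0 from rfl, hg0] at h; simp [act] at h
    · exact h2 (mk [] false) (by simp [opts]) h_0_2
  have h_1_0 : ¬ PPos (add (chain g 1) (mk [] true)) := by
    rw [ppos_add_iff]
    rintro (h | ⟨h1, h2⟩)
    · rw [show (chain g 1).act = g 1 from rfl, hg1] at h; simp [act] at h
    · exact h1 (chain g 0) (by rw [show (chain g 1).opts = [chain g 0] from rfl]; simp) h_0_0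
  have h_0_4 : PPos (add (chain g 0) (mk [(mk [(mk [] false)] false)] true)) := by
    rw [ppos_add_iff]
    refine Or.inr ⟨?_, ?_⟩
    · rw [opts_chain_zero]; simp
    · intro Z' hZ'
      simp only [opts, List.mem_cons, List.not_mem_nil, or_false] at hZ'
      subst hZ'
      exact h_0_3
  have h_1_1 : PPos (add (chain g 1) (mk [(mk [] true)] true)) := by
    rw [ppos_add_iff]
    refine Or.inr ⟨?_, ?_⟩
    · rw [show (chain g 1).opts = [chain g 0] from rfl]
      simp only [List.mem_singleton]
      rintro _ rfl
      exact h_0_1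
    · intro Z' hZ'
      simp only [opts, List.mem_cons, List.not_mem_nil, or_false] at hZ'
      subst hZ'
      exact h_1_0
  have h_2_1 : ¬ PPos (add (chain g 2) (mk [(mk [] true)] true)) := by
    rw [ppos_add_iff]
    rintro (h | ⟨h1, h2⟩)
    · rw [show (chain g 2).act = g 2 from rfl, hg2] at h; simp [act] at h
    · exact h1 (chain g 1) (by rw [show (chain g 2).opts = [chain g 1] from rfl]; simp) h_1_1
  have h_2_3 : PPos (add (chain g 2) (mk [(mk [] false)] false)) := by
    rw [ppos_add_iff]
    exact Or.inl (by rw [show (chain g 2).act = g 2 from rfl, hg2]; rfl)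
  have h_2_4 : ¬ PPos (add (chain g 2) (mk [(mk [(mk [] false)] false)] true)) := by
    rw [ppos_add_iff]
    rintro (h | ⟨h1, h2⟩)
    · rw [show (chain g 2).act = g 2 from rfl, hg2] at h; simp [act] at h
    · exact h2 (mk [(mk [] false)] false) (by simp [opts]) h_2_3
  have h_0_5 : ¬ PPos (add (chain g 0) (mk [(mk [(mk [] true)] true), (mk [(mk [(mk [] false)] false)] true)] true)) := by
    rw [ppos_add_iff]
    rintro (h | ⟨h1, h2⟩)
    · rw [show (chain g 0).act = g 0 from rfl, hg0] at h; simp [act] at h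
    · exact h2 (mk [(mk [(mk [] false)] false)] true) (by simp [opts]) h_0_4
  have h_1_5 : ¬ PPos (add (chain g 1) (mk [(mk [(mk [] true)] true), (mk [(mk [(mk [] false)] false)] true)] true)) := by
    rw [ppos_add_iff]
    rintro (h | ⟨h1, h2⟩)
    · rw [show (chain g 1).act = g 1 from rfl, hg1] at h; simp [act] at h
    · exact h2 (mk [(mk [] true)] true) (by simp [opts]) h_1_1
  have h_2_5 : PPos (add (chain g 2) (mk [(mk [(mk [] true)] true), (mk [(mk [(mk [] false)] false)] true)] true)) := by
    rw [ppos_add_iff]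
    refine Or.inr ⟨?_, ?_⟩
    · rw [show (chain g 2).opts = [chain g 1] from rfl]
      simp only [List.mem_singleton]
      rintro _ rfl
      exact h_1_5
    · intro Z' hZ'
      simp only [opts, List.mem_cons, List.not_mem_nil, or_false] at hZ'
      rcases hZ' with rfl | rfl
      · exact h_2_1
      · exact h_2_4
  exact ⟨(mk [(mk [(mk [] true)] true), (mk [(mk [(mk [] false)] false)] true)] true), rfl, h_0_5, h_2_5⟩

theorem exYlem_110 (g : ℕ → Bool) (hg0 : g 0 = true) (hg1 : g 1 = true) (hg2 : g 2 = false) :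
    ∃ Y : AGame, Y.act = true ∧ ¬ PPos (add (chain g 0) Y) ∧ PPos (add (chain g 2) Y) := by
  have h_0_0 : PPos (add (chain g 0) (mk [] true)) := by
    rw [ppos_add_iff]
    refine Or.inr ⟨?_, ?_⟩
    · rw [opts_chain_zero]; simp
    · intro Z' hZ'; simp [opts] at hZ'
  have h_0_2 : PPos (add (chain g 0) (mk [] false)) := by
    rw [ppos_add_iff]
    refine Or.inr ⟨?_, ?_⟩
    · rw [opts_chain_zero]; simp
    · intro Z' hZ'; simp [opts] at hZ'
  have h_0_1 : ¬ PPos (add (chain g 0) (mk [(mk [] true)] true)) := by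
    rw [ppos_add_iff]
    rintro (h | ⟨h1, h2⟩)
    · rw [show (chain g 0).act = g 0 from rfl, hg0] at h; simp [act] at h
    · exact h2 (mk [] true) (by simp [opts]) h_0_0
  have h_0_3 : ¬ PPos (add (chain g 0) (mk [(mk [] false)] false)) := by
    rw [ppos_add_iff]
    rintro (h | ⟨h1, h2⟩)
    · rw [show (chain g 0).act = g 0 from rfl, hg0] at h; simp [act] at h
    · exact h2 (mk [] false) (by simp [opts]) h_0_2
  have h_1_0 : ¬ PPos (add (chain g 1) (mk [] true)) := by
    rw [ppos_add_iff]
    rintro (h | ⟨h1, h2⟩)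
    · rw [show (chain g 1).act = g 1 from rfl, hg1] at h; simp [act] at h
    · exact h1 (chain g 0) (by rw [show (chain g 1).opts = [chain g 0] from rfl]; simp) h_0_0
  have h_0_4 : PPos (add (chain g 0) (mk [(mk [(mk [] false)] false)] true)) := by
    rw [ppos_add_iff]
    refine Or.inr ⟨?_, ?_⟩
    · rw [opts_chain_zero]; simp
    · intro Z' hZ'
      simp only [opts, List.mem_cons, List.not_mem_nil, or_false] at hZ'
      subst hZ'
      exact h_0_3
  have h_1_1 : PPos (add (chain g 1) (mk [(mk [] true)] true)) := by
    rw [ppos_add_iff]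
    refine Or.inr ⟨?_, ?_⟩
    · rw [show (chain g 1).opts = [chain g 0] from rfl]
      simp only [List.mem_singleton]
      rintro _ rfl
      exact h_0_1
    · intro Z' hZ'
      simp only [opts, List.mem_cons, List.not_mem_nil, or_false] at hZ'
      subst hZ'
      exact h_1_0
  have h_2_1 : ¬ PPos (add (chain g 2) (mk [(mk [] true)] true)) := by
    rw [ppos_add_iff]
    rintro (h | ⟨h1, h2⟩)
    · rw [show (chain g 2).act = g 2 from rfl, hg2] at h; simp [act] at h
    · exact h1 (chain g 1) (by rw [show (chain g 2).opts = [chain g 1] from rfl]; simp) h_1_1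
  have h_2_3 : PPos (add (chain g 2) (mk [(mk [] false)] false)) := by
    rw [ppos_add_iff]
    exact Or.inl (by rw [show (chain g 2).act = g 2 from rfl, hg2]; rfl)
  have h_2_4 : ¬ PPos (add (chain g 2) (mk [(mk [(mk [] false)] false)] true)) := by
    rw [ppos_add_iff]
    rintro (h | ⟨h1, h2⟩)
    · rw [show (chain g 2).act = g 2 from rfl, hg2] at h; simp [act] at h
    · exact h2 (mk [(mk [] false)] false) (by simp [opts]) h_2_3
  have h_0_5 : ¬ PPos (add (chain g 0) (mk [(mk [(mk [] true)] true), (mk [(mk [(mk [] false)] false)] true)] true)) := by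
    rw [ppos_add_iff]
    rintro (h | ⟨h1, h2⟩)
    · rw [show (chain g 0).act = g 0 from rfl, hg0] at h; simp [act] at h
    · exact h2 (mk [(mk [(mk [] false)] false)] true) (by simp [opts]) h_0_4
  have h_1_5 : ¬ PPos (add (chain g 1) (mk [(mk [(mk [] true)] true), (mk [(mk [(mk [] false)] false)] true)] true)) := by
    rw [ppos_add_iff]
    rintro (h | ⟨h1, h2⟩)
    · rw [show (chain g 1).act = g 1 from rfl, hg1] at h; simp [act] at h
    · exact h2 (mk [(mk [] true)] true) (by simp [opts]) h_1_1
  have h_2_5 : PPos (add (chain g 2) (mk [(mk [(mk [] true)] true), (mk [(mk [(mk [] false)] false)] true)] true)) := by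
    rw [ppos_add_iff]
    refine Or.inr ⟨?_, ?_⟩
    · rw [show (chain g 2).opts = [chain g 1] from rfl]
      simp only [List.mem_singleton]
      rintro _ rfl
      exact h_1_5
    · intro Z' hZ'
      simp only [opts, List.mem_cons, List.not_mem_nil, or_false] at hZ'
      rcases hZ' with rfl | rfl
      · exact h_2_1
      · exact h_2_4
  exact ⟨(mk [(mk [(mk [] true)] true), (mk [(mk [(mk [] false)] false)] true)] true), rfl, h_0_5, h_2_5⟩

end AGame

theorem AGame.chain_canonical' (g : ℕ → Bool) (n : ℕ) :
    AGame.Canonical (AGame.chain g n) ↔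
      (n ≤ 1 ∨ (2 ≤ n ∧
        ((g 0 = false ∧ g 1 = false ∧ g 2 = true) ∨
         (g 0 = false ∧ g 1 = true ∧ g 2 = true) ∨
         (g 0 = true ∧ g 1 = false ∧ g 2 = false) ∨
         (g 0 = true ∧ g 1 = false ∧ g 2 = true) ∨
         (g 0 = true ∧ g 1 = true ∧ g 2 = false)))) := by
  rcases Nat.lt_or_ge n 2 with hn | hn
  · constructor
    · intro _; left; omega
    · intro _
      rw [AGame.canonical_chain_iff]
      intro k hk; omega
  · have hgood : ∀ Y : AGame, Y.act = true → ¬ AGame.PPos (AGame.add (AGame.chain g 0) Y) →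
        AGame.PPos (AGame.add (AGame.chain g 2) Y) → AGame.Canonical (AGame.chain g n) := by
      intro Y hY h0 h2
      rw [AGame.canonical_chain_iff]
      intro k _
      exact AGame.good_side g Y hY h0 h2 k
    have hbad : AGame.Equiv (AGame.chain g 0) (AGame.chain g 2) →
        ¬ AGame.Canonical (AGame.chain g n) := by
      intro hEq hcan
      exact (AGame.canonical_chain_iff g n).mp hcan 0 (by omega) hEq
    cases hg0 : g 0 <;> cases hg1 : g 1 <;> cases hg2 : g 2
    · -- f f f : bad
      constructor
      · intro h
        exact absurd (AGame.equiv_bad g (by rw [hg2, hg0]) (Or.inl hg0)) (fun he => hbad he h)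
      · rintro (h | ⟨-, h⟩)
        · omega
        · exfalso; simp at h
    · -- f f t : good 001
      constructor
      · intro _; exact Or.inr ⟨hn, Or.inl ⟨rfl, rfl, rfl⟩⟩
      · intro _
        obtain ⟨Y, hY, h0, h2⟩ := AGame.exYlem_001 g hg0 hg1 hg2
        exact hgood Y hY h0 h2
    · -- f t f : bad
      constructor
      · intro h
        exact absurd (AGame.equiv_bad g (by rw [hg2, hg0]) (Or.inl hg0)) (fun he => hbad he h)
      · rintro (h | ⟨-, h⟩)
        · omega
        · exfalso; simp at h
    · -- f t t : good 011
      constructor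
      · intro _; exact Or.inr ⟨hn, Or.inr (Or.inl ⟨rfl, rfl, rfl⟩)⟩
      · intro _
        obtain ⟨Y, hY, h0, h2⟩ := AGame.exYlem_011 g hg0 hg1 hg2
        exact hgood Y hY h0 h2
    · -- t f f : good 100
      constructor
      · intro _; exact Or.inr ⟨hn, Or.inr (Or.inr (Or.inl ⟨rfl, rfl, rfl⟩))⟩
      · intro _
        obtain ⟨Y, hY, h0, h2⟩ := AGame.exYlem_100 g hg0 hg1 hg2
        exact hgood Y hY h0 h2
    · -- t f t : good 101
      constructor
      · intro _; exact Or.inr ⟨hn, Or.inr (Or.inr (Or.inr (Or.inl ⟨rfl, rfl, rfl⟩)))⟩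
      · intro _
        obtain ⟨Y, hY, h0, h2⟩ := AGame.exYlem_101 g hg0 hg1 hg2
        exact hgood Y hY h0 h2
    · -- t t f : good 110
      constructor
      · intro _; exact Or.inr ⟨hn, Or.inr (Or.inr (Or.inr (Or.inr ⟨rfl, rfl, rfl⟩)))⟩
      · intro _
        obtain ⟨Y, hY, h0, h2⟩ := AGame.exYlem_110 g hg0 hg1 hg2
        exact hgood Y hY h0 h2
    · -- t t t : bad
      constructor
      · intro h
        exact absurd (AGame.equiv_bad g (by rw [hg2, hg0]) (Or.inr hg1)) (fun he => hbad he h)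
      · rintro (h | ⟨-, h⟩)
        · omega
        · exfalso; simp at h

/-- Canonicity of the linear chains `∅^{g₀g₁…gₙ}`. -/
theorem AGame.chain_canonical (g : ℕ → Bool) (n : ℕ) :
    AGame.Canonical (AGame.chain g n) ↔
      (n ≤ 1 ∨ (2 ≤ n ∧
        ((g 0 = false ∧ g 1 = false ∧ g 2 = true) ∨
         (g 0 = false ∧ g 1 = true ∧ g 2 = true) ∨
         (g 0 = true ∧ g 1 = false ∧ g 2 = false) ∨
         (g 0 = true ∧ g 1 = false ∧ g 2 = true) ∨
         (g 0 = true ∧ g 1 = true ∧ g 2 = false)))) := AGame.chain_canonical' g n
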